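/- There exists a₀ ∈ ℕ such that for every integer a ≥ a₀ the following holds. Set b = a² and ε = a^{−1/2}, let X be a set of size b, and let m be any integer with m ≥ ε·b/(1 + 2ε). Then for every m-element subset X'' of X, the number of (b−a)-element subsets of X that contain X'' is strictly less than (ε/(1 + 2ε))·C(b, b−a), where C(b, b−a) is the total number of (b−a)-element subsets of X. -/

import Mathlib

open Finset

lemma count_lemma {α : Type} [DecidableEq α] (X X'' : Finset α) (h : X'' ⊆ X)
    (k : ℕ) (hk : X''.card ≤ k) :
    ((X.powersetCard k).filter (fun S => X'' ⊆ S)).card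
      = (X.card - X''.card).choose (k - X''.card) := by
  rw [← card_sdiff_of_subset h, ← Finset.card_powersetCard]
  apply Finset.card_nbij' (fun S => S \ X'') (fun T => T ∪ X'')
  · intro S hS
    simp only [mem_coe, mem_filter, mem_powersetCard] at hS
    obtain ⟨⟨hSX, hScard⟩, hX''S⟩ := hS
    rw [mem_coe, mem_powersetCard]
    constructor
    · exact sdiff_subset_sdiff hSX (le_refl _)
    · rw [card_sdiff_of_subset hX''S, hScard]
  · intro T hT
    rw [mem_coe, mem_powersetCard] at hT
    obtain ⟨hT1, hT2⟩ := hT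
    simp only [mem_coe, mem_filter, mem_powersetCard]
    have hTX : T ⊆ X := hT1.trans (sdiff_subset)
    have hdisj : Disjoint T X'' := disjoint_of_subset_left hT1 sdiff_disjoint
    refine ⟨⟨union_subset hTX h, ?_⟩, subset_union_right⟩
    rw [card_union_of_disjoint hdisj, hT2]
    omega
  · intro S hS
    simp only [mem_coe, mem_filter, mem_powersetCard] at hS
    exact (sdiff_union_of_subset hS.2)
  · intro T hT
    rw [mem_coe, mem_powersetCard] at hT
    have hdisj : Disjoint T X'' := disjoint_of_subset_left hT.1 sdiff_disjoint
    exact union_sdiff_cancel_right hdisj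

lemma ratio_lemma : ∀ (m b k : ℕ), m ≤ k → k ≤ b →
    (b - m).choose (k - m) * b ^ m ≤ b.choose k * k ^ m := by
  intro m
  induction m with
  | zero => simp
  | succ m ih =>
    intro b k hm hk
    have hmk : m ≤ k := by omega
    have step : (b - (m+1)).choose (k - (m+1)) * b ≤ (b - m).choose (k - m) * k := by
      have hbm : 0 < b - m := by omega
      refine Nat.le_of_mul_le_mul_left ?_ hbm
      have hid : (b - m) * (b - (m+1)).choose (k - (m+1)) = (b-m).choose (k-m) * (k - m) := by
        obtain ⟨B, hB⟩ : ∃ B, b - m = B + 1 := ⟨b - m - 1, by omega⟩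
        obtain ⟨K, hK⟩ : ∃ K, k - m = K + 1 := ⟨k - m - 1, by omega⟩
        have e1 : b - (m+1) = B := by omega
        have e2 : k - (m+1) = K := by omega
        rw [hB, hK, e1, e2]
        exact Nat.add_one_mul_choose_eq B K
      calc (b - m) * ((b - (m+1)).choose (k - (m+1)) * b)
          = ((b-m) * (b - (m+1)).choose (k - (m+1))) * b := by ring
        _ = (b-m).choose (k-m) * ((k - m) * b) := by rw [hid]; ring
        _ ≤ (b-m).choose (k-m) * ((b - m) * k) := by
            apply Nat.mul_le_mul_left
            have : (k - m) * b ≤ (b - m) * k := by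
              have := Nat.mul_le_mul_left m hk  -- m*k ≤ m*b? no
              nlinarith [Nat.sub_add_cancel hmk, Nat.sub_add_cancel (hmk.trans hk),
                Nat.mul_le_mul_right k (Nat.mul_le_mul_left m hk)]
            exact this
        _ = (b - m) * ((b-m).choose (k-m) * k) := by ring
    calc (b - (m+1)).choose (k - (m+1)) * b ^ (m+1)
        = ((b - (m+1)).choose (k - (m+1)) * b) * b ^ m := by ring
      _ ≤ ((b - m).choose (k - m) * k) * b ^ m := Nat.mul_le_mul_right _ step
      _ = ((b - m).choose (k - m) * b ^ m) * k := by ring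
      _ ≤ (b.choose k * k ^ m) * k := Nat.mul_le_mul_right _ (ih b k hmk hk)
      _ = b.choose k * k ^ (m+1) := by ring

set_option maxHeartbeats 1600000 in
theorem counting_subsets_containing :
    ∃ a₀ : ℕ, ∀ a : ℕ, a₀ ≤ a →
      ∀ b : ℕ, b = a ^ 2 → ∀ ε : ℝ, ε = (a : ℝ) ^ (-(1 / 2 : ℝ)) →
      ∀ (α : Type) [DecidableEq α] (X : Finset α), X.card = b →
      ∀ m : ℕ, ε * (b : ℝ) / (1 + 2 * ε) ≤ (m : ℝ) →
      ∀ X'' : Finset α, X'' ⊆ X → X''.card = m →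
      ((((X.powersetCard (b - a)).filter (fun S => X'' ⊆ S)).card : ℝ)
        < (ε / (1 + 2 * ε)) * (Nat.choose b (b - a) : ℝ)) := by
  use 1296
  intro a ha b hb ε hε α _ X hX m hm X'' hsub hcard
  have haR : (1296 : ℝ) ≤ (a : ℝ) := by exact_mod_cast ha
  have ha0 : (0 : ℝ) < (a : ℝ) := by linarith
  set s : ℝ := Real.sqrt a with hsdef
  clear_value s
  have hs0 : 0 < s := by rw [hsdef]; exact Real.sqrt_pos.mpr ha0
  have hss : s * s = (a : ℝ) := by rw [hsdef]; exact Real.mul_self_sqrt (le_of_lt ha0)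
  have hs36 : (36 : ℝ) ≤ s := by
    have : Real.sqrt 1296 ≤ s := by rw [hsdef]; exact Real.sqrt_le_sqrt haR
    have h36 : Real.sqrt 1296 = 36 := by
      rw [show (1296 : ℝ) = 36 ^ 2 by norm_num, Real.sqrt_sq (by norm_num)]
    linarith [this, h36.symm.le]
  have hεs : ε = 1 / s := by
    rw [hε, Real.rpow_neg (le_of_lt ha0), ← Real.sqrt_eq_rpow, one_div, hsdef]
  have hfrac : ε / (1 + 2 * ε) = 1 / (s + 2) := by
    rw [hεs]
    field_simp
  -- cast facts
  have hab : a ≤ b := by subst hb; nlinarith [Nat.one_le_iff_ne_zero.mpr (by omega : a ≠ 0)]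
  set k : ℕ := b - a with hkdef
  clear_value k
  have hkb : k ≤ b := by rw [hkdef]; exact Nat.sub_le _ _
  have hkR : (k : ℝ) = (b : ℝ) - (a : ℝ) := by
    rw [hkdef, Nat.cast_sub hab]
  have hbR : (b : ℝ) = (a : ℝ) ^ 2 := by rw [hb]; push_cast; ring
  have hCpos : 0 < (b.choose k : ℝ) := by
    exact_mod_cast Nat.choose_pos hkb
  have hfracpos : (0 : ℝ) < 1 / (s + 2) := by positivity
  -- the bound on m
  have hmlb : (a : ℝ) ^ 2 / (s + 2) ≤ (m : ℝ) := by
    have : ε * (b : ℝ) / (1 + 2 * ε) = (a : ℝ) ^ 2 / (s + 2) := by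
      rw [hεs, hbR]; field_simp
    linarith [hm, this.symm.le]
  by_cases hmk : m ≤ k
  · -- main case
    rw [count_lemma X X'' hsub k (by rw [hcard]; exact hmk), hX, hcard]
    have hratio := ratio_lemma m b k hmk hkb
    have hratioR : ((b - m).choose (k - m) : ℝ) * (b : ℝ) ^ m
        ≤ (b.choose k : ℝ) * (k : ℝ) ^ m := by exact_mod_cast hratio
    have hb0 : (0 : ℝ) < (b : ℝ) := by rw [hbR]; positivity
    have hstep1 : ((b - m).choose (k - m) : ℝ)
        ≤ (b.choose k : ℝ) * ((k : ℝ) / (b : ℝ)) ^ m := by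
      rw [div_pow, ← mul_div_assoc, le_div_iff₀ (by positivity)]
      linarith
    -- (k/b)^m < 1/(s+2)
    have hkbval : (k : ℝ) / (b : ℝ) = 1 - 1 / (a : ℝ) := by
      rw [hkR, hbR]; field_simp
    have hbase0 : (0 : ℝ) ≤ 1 - 1 / (a : ℝ) := by
      have : 1 / (a : ℝ) ≤ 1 := by
        rw [div_le_one ha0]; linarith
      linarith
    have hexp1 : 1 - 1 / (a : ℝ) ≤ Real.exp (-(1 / (a : ℝ))) := by
      have := Real.add_one_le_exp (-(1 / (a : ℝ)))
      linarith
    have hpow : ((k : ℝ) / (b : ℝ)) ^ m ≤ Real.exp (-((m : ℝ) / (a : ℝ))) := by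
      rw [hkbval]
      calc (1 - 1 / (a : ℝ)) ^ m ≤ Real.exp (-(1 / (a : ℝ))) ^ m :=
            pow_le_pow_left₀ hbase0 hexp1 m
        _ = Real.exp (-((m : ℝ) / (a : ℝ))) := by
            rw [← Real.exp_nat_mul]; ring_nf
    have hma : s / 3 ≤ (m : ℝ) / (a : ℝ) := by
      rw [div_le_div_iff₀ (by norm_num) ha0]
      have h2 : (a : ℝ) ^ 2 ≤ (m : ℝ) * (s + 2) := by
        have h1 := hmlb
        rw [div_le_iff₀ (by linarith)] at h1; linarith
      nlinarith [hss, hs36, hs0.le, sq_nonneg s, sq_nonneg (s - 1)]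
    have hexpbig : s + 2 < Real.exp (s / 3) := by
      have h6 : 1 + s / 6 ≤ Real.exp (s / 6) := by
        have := Real.add_one_le_exp (s / 6); linarith
      have hsq : (1 + s / 6) * (1 + s / 6) ≤ Real.exp (s / 6) * Real.exp (s / 6) :=
        mul_le_mul h6 h6 (by linarith) (by positivity)
      have hee : Real.exp (s / 6) * Real.exp (s / 6) = Real.exp (s / 3) := by
        rw [← Real.exp_add]; ring_nf
      calc s + 2 < (1 + s / 6) * (1 + s / 6) := by nlinarith [hs36]
        _ ≤ Real.exp (s / 6) * Real.exp (s / 6) := hsq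
        _ = Real.exp (s / 3) := hee
    have hfinal : Real.exp (-((m : ℝ) / (a : ℝ))) < 1 / (s + 2) := by
      have h1 : s + 2 < Real.exp ((m : ℝ) / (a : ℝ)) :=
        lt_of_lt_of_le hexpbig (Real.exp_le_exp.mpr hma)
      rw [Real.exp_neg, one_div]
      exact inv_strictAnti₀ (by linarith) h1
    have : ((b - m).choose (k - m) : ℝ) < (b.choose k : ℝ) * (1 / (s + 2)) := by
      calc ((b - m).choose (k - m) : ℝ) ≤ (b.choose k : ℝ) * ((k : ℝ) / (b : ℝ)) ^ m := hstep1
        _ < (b.choose k : ℝ) * (1 / (s + 2)) := by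
            apply mul_lt_mul_of_pos_left _ hCpos
            calc ((k : ℝ) / (b : ℝ)) ^ m ≤ Real.exp (-((m : ℝ) / (a : ℝ))) := hpow
              _ < 1 / (s + 2) := hfinal
    rw [hfrac]
    linarith
  · -- filter is empty
    have hempty : (X.powersetCard k).filter (fun S => X'' ⊆ S) = ∅ := by
      rw [Finset.filter_eq_empty_iff]
      intro S hS hXS
      rw [mem_powersetCard] at hS
      have := Finset.card_le_card hXS
      rw [hcard, hS.2] at this
      omega
    rw [hempty]
    simp only [Finset.card_empty, Nat.cast_zero]
    rw [hfrac]
    positivity
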